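/- For 0 < u < 1 with p = (1+u)/2, q = (1-u)/2, and any λ ∈ ℝ, the partial derivative ∂Q̃/∂λ(u,λ) satisfies ∂Q̃/∂λ(u,λ) ≤ (ln p) · Q̃(u,λ), where Q̃(u,λ) = (p^λ - q^λ)/λ for λ ≠ 0 and Q̃(u,0) = ln(p/q). -/

import Mathlib

/-- Quantile function of `|X|` for a Tukey Lambda random variable `X`. -/
noncomputable def tukeyQabs (x lam : ℝ) : ℝ :=
  if lam = 0 then Real.log ((1 + x) / (1 - x))
  else (((1 + x) / 2) ^ lam - ((1 - x) / 2) ^ lam) / lam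

open Real Filter Topology

private lemma exp_taylor3 (x : ℝ) (hx : |x| ≤ 1) :
    |Real.exp x - 1 - x - x ^ 2 / 2| ≤ |x| ^ 3 := by
  have h := Real.exp_bound hx (n := 3) (by norm_num)
  have hsum : ∑ i ∈ Finset.range 3, x ^ i / (Nat.factorial i : ℝ)
      = 1 + x + x ^ 2 / 2 := by
    simp [Finset.sum_range_succ, Nat.factorial]
  rw [hsum] at h
  have : |Real.exp x - 1 - x - x ^ 2 / 2| = |Real.exp x - (1 + x + x ^ 2 / 2)| := by
    ring_nf
  rw [this]
  refine h.trans ?_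
  have h3 : (0:ℝ) ≤ |x| ^ 3 := by positivity
  norm_num [Nat.factorial]
  nlinarith [h3]

/-- For `0 < u < 1`, `p = (1+u)/2`, and any `λ`,
`∂Q̃/∂λ(u,λ) ≤ (ln p)·Q̃(u,λ)`. -/
theorem tukeyQabs_deriv_bound (u lam : ℝ) (hu0 : 0 < u) (hu1 : u < 1) :
    deriv (fun l : ℝ => tukeyQabs u l) lam ≤
      Real.log ((1 + u) / 2) * tukeyQabs u lam := by
  have hp : (0:ℝ) < (1 + u) / 2 := by linarith
  have hq : (0:ℝ) < (1 - u) / 2 := by linarith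
  set a := Real.log ((1 + u) / 2) with ha
  set b := Real.log ((1 - u) / 2) with hb
  have key : ∀ l : ℝ, l ≠ 0 →
      tukeyQabs u l = (Real.exp (a * l) - Real.exp (b * l)) / l := by
    intro l hl
    simp only [tukeyQabs, if_neg hl]
    rw [Real.rpow_def_of_pos hp, Real.rpow_def_of_pos hq]
  have h0 : tukeyQabs u 0 = a - b := by
    have h1 : tukeyQabs u 0 = Real.log ((1 + u) / (1 - u)) := by simp [tukeyQabs]
    have h2 : (1 + u) / (1 - u) = ((1 + u) / 2) / ((1 - u) / 2) := by
      have hne : (1:ℝ) - u ≠ 0 := by linarith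
      field_simp
    rw [h1, h2, Real.log_div (ne_of_gt hp) (ne_of_gt hq)]
  rcases eq_or_ne lam 0 with rfl | hl
  · -- λ = 0 : derivative is (a² - b²)/2
    have hd : HasDerivAt (fun l : ℝ => tukeyQabs u l) ((a ^ 2 - b ^ 2) / 2) 0 := by
      rw [hasDerivAt_iff_tendsto_slope]
      rw [← tendsto_sub_nhds_zero_iff]
      set c := (a ^ 2 - b ^ 2) / 2 with hc
      have hδ : (0:ℝ) < 1 / (|a| + |b| + 1) := by positivity
      apply squeeze_zero_norm' (a := fun l => (|a| ^ 3 + |b| ^ 3) * |l|)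
      · have hmem : {l : ℝ | |l| ≤ 1 / (|a| + |b| + 1)} ∈ 𝓝[≠] (0:ℝ) := by
          apply eventually_nhdsWithin_of_eventually_nhds
          have : Metric.closedBall (0:ℝ) (1 / (|a| + |b| + 1)) ∈ 𝓝 (0:ℝ) :=
            Metric.closedBall_mem_nhds 0 hδ
          filter_upwards [this] with l hl
          simpa [Real.dist_eq] using hl
        filter_upwards [hmem, self_mem_nhdsWithin] with l hle hlmem
        have hl : l ≠ 0 := hlmem
        have hal : |a * l| ≤ 1 := by
          rw [abs_mul]
          calc |a| * |l| ≤ |a| * (1 / (|a| + |b| + 1)) := by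
                exact mul_le_mul_of_nonneg_left hle (abs_nonneg a)
            _ ≤ 1 := by
                rw [mul_one_div, div_le_one (by positivity)]
                linarith [abs_nonneg b]
        have hbl : |b * l| ≤ 1 := by
          rw [abs_mul]
          calc |b| * |l| ≤ |b| * (1 / (|a| + |b| + 1)) := by
                exact mul_le_mul_of_nonneg_left hle (abs_nonneg b)
            _ ≤ 1 := by
                rw [mul_one_div, div_le_one (by positivity)]
                linarith [abs_nonneg a]
        have e1 := exp_taylor3 (a * l) hal
        have e2 := exp_taylor3 (b * l) hbl
        have hl2 : (0:ℝ) < l ^ 2 := by positivity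
        have hsl : slope (fun l : ℝ => tukeyQabs u l) 0 l - c =
            ((Real.exp (a * l) - 1 - a * l - (a * l) ^ 2 / 2)
              - (Real.exp (b * l) - 1 - b * l - (b * l) ^ 2 / 2)) / l ^ 2 := by
          rw [slope_def_field, key l hl, h0, hc]
          field_simp
          ring
        rw [Real.norm_eq_abs, hsl, abs_div, abs_of_pos hl2]
        have hnum : |(Real.exp (a * l) - 1 - a * l - (a * l) ^ 2 / 2)
              - (Real.exp (b * l) - 1 - b * l - (b * l) ^ 2 / 2)|
            ≤ (|a| ^ 3 + |b| ^ 3) * |l| ^ 3 := by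
          calc _ ≤ |Real.exp (a * l) - 1 - a * l - (a * l) ^ 2 / 2|
                + |Real.exp (b * l) - 1 - b * l - (b * l) ^ 2 / 2| := abs_sub _ _
            _ ≤ |a * l| ^ 3 + |b * l| ^ 3 := add_le_add e1 e2
            _ = (|a| ^ 3 + |b| ^ 3) * |l| ^ 3 := by rw [abs_mul, abs_mul]; ring
        calc _ ≤ ((|a| ^ 3 + |b| ^ 3) * |l| ^ 3) / l ^ 2 :=
              div_le_div_of_nonneg_right hnum hl2.le
          _ = (|a| ^ 3 + |b| ^ 3) * |l| := by
              have h0' : |l| ≠ 0 := abs_ne_zero.mpr hl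
              rw [show l ^ 2 = |l| ^ 2 from (sq_abs l).symm,
                div_eq_iff (pow_ne_zero 2 h0')]
              ring
      · have : Filter.Tendsto (fun l : ℝ => (|a| ^ 3 + |b| ^ 3) * |l|) (𝓝 0) (𝓝 0) := by
          have := ((continuous_const.mul continuous_abs :
            Continuous fun l : ℝ => (|a| ^ 3 + |b| ^ 3) * |l|).tendsto (0:ℝ))
          simpa only [Pi.mul_def, Pi.mul_apply, abs_zero, mul_zero] using this
        exact this.mono_left nhdsWithin_le_nhds
    rw [hd.deriv, h0]
    nlinarith [sq_nonneg (a - b)]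
  · -- λ ≠ 0
    set A := Real.exp (a * lam) with hA
    set B := Real.exp (b * lam) with hB
    have hA0 : 0 < A := Real.exp_pos _
    have hB0 : 0 < B := Real.exp_pos _
    have hg : HasDerivAt (fun l : ℝ => (Real.exp (a * l) - Real.exp (b * l)) / l)
        (((A * a - B * b) * lam - (A - B) * 1) / lam ^ 2) lam := by
      have h1 : HasDerivAt (fun l : ℝ => Real.exp (a * l)) (A * a) lam := by
        simpa using ((hasDerivAt_id lam).const_mul a).exp
      have h2 : HasDerivAt (fun l : ℝ => Real.exp (b * l)) (B * b) lam := by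
        simpa using ((hasDerivAt_id lam).const_mul b).exp
      exact (h1.sub h2).div (hasDerivAt_id lam) hl
    have heq : deriv (fun l : ℝ => tukeyQabs u l) lam =
        ((A * a - B * b) * lam - (A - B) * 1) / lam ^ 2 := by
      have hev : (fun l : ℝ => tukeyQabs u l) =ᶠ[𝓝 lam]
          (fun l : ℝ => (Real.exp (a * l) - Real.exp (b * l)) / l) := by
        filter_upwards [isOpen_compl_singleton.mem_nhds
          (show lam ∈ ({0}ᶜ : Set ℝ) by simpa using hl)] with l hl'
        exact key l hl'
      rw [hev.deriv_eq, hg.deriv]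
    rw [heq, key lam hl]
    have hexp : A - B ≥ B * ((a - b) * lam) := by
      have h1 := Real.add_one_le_exp ((a - b) * lam)
      have h2 : A = B * Real.exp ((a - b) * lam) := by
        rw [hA, hB, ← Real.exp_add]; ring_nf
      have h3 := mul_le_mul_of_nonneg_left h1 hB0.le
      nlinarith [h3, h2]
    have hrw : a * ((A - B) / lam) = (a * lam * (A - B)) / lam ^ 2 := by
      field_simp
    rw [hrw]
    apply div_le_div_of_nonneg_right _ (sq_nonneg lam)
    nlinarith [hexp]
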